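/- The rational Darboux function H₀(x,y) = f₁(x,y)⁵ / f₂(x,y)⁴ is a first integral of the unperturbed Żołądek cubic system: for every real a and every point (x,y) ∈ ℝ² with f₂(x,y) ≠ 0, the directional derivative of H₀ at (x,y) in the direction of the vector (P(x,y), Q(x,y)) is zero, i.e. P·∂H₀/∂x + Q·∂H₀/∂y = 0 at (x,y). -/

import Mathlib

noncomputable section

/-- The `x`-component of the unperturbed Żołądek cubic vector field. -/
def P₀ (a x y : ℝ) : ℝ := a + 5/2 * x + x * y + x^3

/-- The `y`-component of the unperturbed Żołądek cubic vector field. -/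
def Q₀ (a x y : ℝ) : ℝ := -2*a*x + 2*y - 3*x^2 + 4*y^2 - a*x^3 + 6*x^2*y

/-- The invariant algebraic curve `f₁`. -/
def f₁ (x y : ℝ) : ℝ := x^4 + 4*x^2 + 4*y

/-- The invariant algebraic curve `f₂`. -/
def f₂ (a x y : ℝ) : ℝ := x^5 + 5*x^3 + 5*x*y + 5/2 * x + a

/-- The rational Darboux function `H₀ = f₁⁵ / f₂⁴`. -/
def H₀ (a x y : ℝ) : ℝ := (f₁ x y)^5 / (f₂ a x y)^4

lemma hdx (a x y : ℝ) (h : f₂ a x y ≠ 0) :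
    HasDerivAt (fun x' => H₀ a x' y)
      ((5 * (f₁ x y)^4 * (4*x^3 + 8*x) * (f₂ a x y)^4
        - (f₁ x y)^5 * (4 * (f₂ a x y)^3 * (5*x^4 + 15*x^2 + 5*y + 5/2)))
        / ((f₂ a x y)^4)^2) x := by
  have h1 : HasDerivAt (fun x' => f₁ x' y) (4*x^3 + 8*x) x := by
    unfold f₁
    have := ((hasDerivAt_pow 4 x).add (((hasDerivAt_pow 2 x).const_mul 4))).add_const (4*y)
    exact this.congr_deriv (by norm_num; ring)
  have h2 : HasDerivAt (fun x' => f₂ a x' y) (5*x^4 + 15*x^2 + 5*y + 5/2) x := by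
    unfold f₂
    have := ((((hasDerivAt_pow 5 x).add ((hasDerivAt_pow 3 x).const_mul 5)).add
      ((hasDerivAt_id x).const_mul (5*y))).add ((hasDerivAt_id x).const_mul (5/2))).add_const a
    simp only [id_eq] at this
    exact (this.congr_deriv (by norm_num; ring : _ = 5*x^4 + 15*x^2 + 5*y + 5/2)).congr_of_eventuallyEq
      (Filter.Eventually.of_forall fun z => by simp only [Pi.add_apply]; ring)
  exact (h1.pow 5).div ((h2.pow 4)) (pow_ne_zero 4 h) |>.congr_deriv (by simp only [Pi.pow_apply]; ring)

lemma hdy (a x y : ℝ) (h : f₂ a x y ≠ 0) :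
    HasDerivAt (fun y' => H₀ a x y')
      ((5 * (f₁ x y)^4 * 4 * (f₂ a x y)^4
        - (f₁ x y)^5 * (4 * (f₂ a x y)^3 * (5*x)))
        / ((f₂ a x y)^4)^2) y := by
  have h1 : HasDerivAt (fun y' => f₁ x y') 4 y := by
    unfold f₁
    have := (((hasDerivAt_id y).const_mul 4)).const_add (x^4 + 4*x^2)
    exact this.congr_deriv (by ring)
  have h2 : HasDerivAt (fun y' => f₂ a x y') (5*x) y := by
    unfold f₂
    have := ((((hasDerivAt_id y).const_mul (5*x)).const_add (x^5 + 5*x^3)).add_const (5/2*x)).add_const a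
    simp only [id_eq] at this
    simpa using this
  exact (h1.pow 5).div ((h2.pow 4)) (pow_ne_zero 4 h) |>.congr_deriv (by simp only [Pi.pow_apply]; ring)

set_option maxHeartbeats 2000000 in
/-- `H₀ = f₁⁵/f₂⁴` is a first integral of the unperturbed Żołądek cubic system:
wherever `f₂ ≠ 0`, the derivative of `H₀` along the vector field `(P, Q)` vanishes,
i.e. `P·∂H₀/∂x + Q·∂H₀/∂y = 0`. -/
theorem H0_first_integral (a x y : ℝ) (h : f₂ a x y ≠ 0) :
    P₀ a x y * deriv (fun x' => H₀ a x' y) x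
      + Q₀ a x y * deriv (fun y' => H₀ a x y') y = 0 := by
  rw [(hdx a x y h).deriv, (hdy a x y h).deriv]
  have e1 : P₀ a x y * (4*x^3 + 8*x) + Q₀ a x y * 4
      = (2 + 4*y + 4*x^2) * f₁ x y := by
    unfold P₀ Q₀ f₁; ring
  have e2 : P₀ a x y * (5*x^4 + 15*x^2 + 5*y + 5/2) + Q₀ a x y * (5*x)
      = (5/2 + 5*y + 5*x^2) * f₂ a x y := by
    unfold P₀ Q₀ f₂; ring
  have key : P₀ a x y * (5 * (f₁ x y)^4 * (4*x^3 + 8*x) * (f₂ a x y)^4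
        - (f₁ x y)^5 * (4 * (f₂ a x y)^3 * (5*x^4 + 15*x^2 + 5*y + 5/2)))
      + Q₀ a x y * (5 * (f₁ x y)^4 * 4 * (f₂ a x y)^4
        - (f₁ x y)^5 * (4 * (f₂ a x y)^3 * (5*x))) = 0 := by
    linear_combination (5*(f₁ x y)^4*(f₂ a x y)^4) * e1
      - (4*(f₁ x y)^5*(f₂ a x y)^3) * e2
  rw [← mul_div_assoc, ← mul_div_assoc, ← add_div, key, zero_div]

end
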